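/- Let α ∈ 𝔻 be nonzero, n ≥ 1, and θ = b_αⁿ where b_α(z) = (z−α)/(1−conj(α)z). Then Q_θ reduces C_φ (both Q_θ and θH²(𝔻) are invariant under C_φ) if and only if φ is the identity map on 𝔻. -/

import Mathlib

open Complex Metric Filter Set

noncomputable section

/-- A holomorphic self-map of the open unit disc. -/
def SelfMapD (φ : ℂ → ℂ) : Prop :=
  DifferentiableOn ℂ φ (Metric.ball (0:ℂ) 1) ∧
  Set.MapsTo φ (Metric.ball (0:ℂ) 1) (Metric.ball (0:ℂ) 1)

/-- Membership in the Hardy space `H²(𝔻)`. -/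
def MemHardy2 (f : ℂ → ℂ) : Prop :=
  DifferentiableOn ℂ f (Metric.ball (0:ℂ) 1) ∧
  ∃ M : ℝ, ∀ r : ℝ, 0 ≤ r → r < 1 →
    (∫ t in (0:ℝ)..(2 * Real.pi),
      ‖f ((r : ℂ) * Complex.exp (t * Complex.I))‖ ^ 2) ≤ M

/-- An inner function: a bounded-by-one holomorphic function on `𝔻` whose radial
boundary values have modulus one almost everywhere. -/
def InnerFunction (θ : ℂ → ℂ) : Prop :=
  DifferentiableOn ℂ θ (Metric.ball (0:ℂ) 1) ∧
  (∀ z ∈ Metric.ball (0:ℂ) 1, ‖θ z‖ ≤ 1) ∧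
  ∀ᵐ t : ℝ, Filter.Tendsto
    (fun r : ℝ => ‖θ ((r : ℂ) * Complex.exp (t * Complex.I))‖)
    (nhdsWithin 1 (Set.Iio 1)) (nhds 1)

/-- The `n`-th Taylor coefficient of `f` at the origin. -/
def hcoef (f : ℂ → ℂ) (n : ℕ) : ℂ := iteratedDeriv n f 0 / n.factorial

/-- The `H²` inner product, via Taylor coefficients. -/
def hInner (f g : ℂ → ℂ) : ℂ := ∑' n : ℕ, hcoef f n * (starRingEnd ℂ) (hcoef g n)

/-- The square of the `H²` norm. -/
def hNorm2 (f : ℂ → ℂ) : ℝ := ∑' n : ℕ, ‖hcoef f n‖ ^ 2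

/-- Membership in the model space `Q_θ = H² ⊖ θH²`. -/
def MemModel (θ f : ℂ → ℂ) : Prop :=
  MemHardy2 f ∧ ∀ g, MemHardy2 g → hInner f (fun z => θ z * g z) = 0

/-- The model space `Q_θ` is invariant under the composition operator `C_φ`. -/
def ModelInv (θ φ : ℂ → ℂ) : Prop :=
  ∀ f, MemModel θ f → MemModel θ (fun z => f (φ z))

/-- The Beurling subspace `θH²` is invariant under the composition operator `C_φ`. -/
def BeurlingInv (θ φ : ℂ → ℂ) : Prop :=
  ∀ f, MemHardy2 f → ∃ g, MemHardy2 g ∧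
    ∀ z ∈ Metric.ball (0:ℂ) 1, θ (φ z) * f (φ z) = θ z * g z

/-- A subspace of functions is invariant under `C_φ` (as functions on the disc). -/
def SpanInvOn (Q : Submodule ℂ (ℂ → ℂ)) (φ : ℂ → ℂ) : Prop :=
  ∀ f ∈ Q, ∃ g ∈ Q, ∀ z ∈ Metric.ball (0:ℂ) 1, f (φ z) = g z

/-- The (holomorphic extension of the) quotient `(θ∘σ)/θ` lies in `H²`. -/
def QuotInH2 (θ σ : ℂ → ℂ) : Prop :=
  ∃ g, MemHardy2 g ∧ ∀ z ∈ Metric.ball (0:ℂ) 1, θ z ≠ 0 → g z = θ (σ z) / θ z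

/-- The model space spanned by `z^t/(1-ᾱz)^{t+1}`, `0 ≤ t ≤ n-1`. -/
def Qball (α : ℂ) (n : ℕ) : Submodule ℂ (ℂ → ℂ) :=
  Submodule.span ℂ
    {f : ℂ → ℂ | ∃ t : ℕ, t < n ∧ f = fun z => z ^ t / (1 - (starRingEnd ℂ) α * z) ^ (t + 1)}

open Polynomial

lemma aux_ball_infinite : (Metric.ball (0:ℂ) 1).Infinite := by
  apply Set.infinite_of_injective_forall_mem (f := fun j : ℕ => ((1 / (j+2) : ℝ) : ℂ))
  · intro x y hxy
    simp only [Complex.ofReal_inj] at hxy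
    have hx : (0:ℝ) < x + 2 := by positivity
    have hy : (0:ℝ) < y + 2 := by positivity
    field_simp at hxy
    exact_mod_cast (add_right_cancel hxy).symm
  · intro j
    rw [mem_ball_zero_iff]
    simp only [Complex.norm_real, Real.norm_eq_abs]
    rw [abs_of_pos (by positivity)]
    rw [div_lt_one (by positivity)]
    linarith [Nat.cast_nonneg (α := ℝ) j]

lemma aux_rm_pow {p : Polynomial ℂ} (hp : p ≠ 0) (a : ℂ) (m : ℕ) :
    (p ^ m).rootMultiplicity a = m * p.rootMultiplicity a := by
  induction m with
  | zero => simp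
  | succ m ih =>
      rw [pow_succ, rootMultiplicity_mul (mul_ne_zero (pow_ne_zero _ hp) hp), ih]
      ring

lemma aux_qball_rep (α : ℂ) (hu : ∀ z ∈ Metric.ball (0:ℂ) 1, 1 - (starRingEnd ℂ) α * z ≠ 0)
    (n : ℕ) (g : ℂ → ℂ) (hg : g ∈ Qball α n) :
    ∃ Q : Polynomial ℂ, Q.degree < (n : ℕ) ∧
      ∀ z ∈ Metric.ball (0:ℂ) 1, g z = Q.eval z / (1 - (starRingEnd ℂ) α * z) ^ n := by
  set β := (starRingEnd ℂ) α with hβ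
  induction hg using Submodule.span_induction with
  | mem f hf =>
      obtain ⟨t, ht, rfl⟩ := hf
      refine ⟨X ^ t * (1 - C β * X) ^ (n - 1 - t), ?_, ?_⟩
      · have h1 : (X ^ t * (1 - C β * X) ^ (n - 1 - t) : Polynomial ℂ).natDegree ≤ t + (n-1-t) := by
          refine le_trans (natDegree_mul_le) (add_le_add ?_ ?_)
          · simp [natDegree_X_pow]
          · refine le_trans (natDegree_pow_le) ?_
            have : (1 - C β * X : Polynomial ℂ).natDegree ≤ 1 := by
              refine le_trans (natDegree_sub_le _ _) ?_
              simp [natDegree_C_mul_le]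
              exact le_trans (natDegree_C_mul_le _ _) (by simp)
            calc (n-1-t) * (1 - C β * X : Polynomial ℂ).natDegree ≤ (n-1-t) * 1 :=
                  Nat.mul_le_mul_left _ this
              _ = n-1-t := by ring
        calc (X ^ t * (1 - C β * X) ^ (n - 1 - t) : Polynomial ℂ).degree
            ≤ ((X ^ t * (1 - C β * X) ^ (n - 1 - t) : Polynomial ℂ).natDegree : WithBot ℕ) :=
              degree_le_natDegree
          _ ≤ ((t + (n-1-t) : ℕ) : WithBot ℕ) := by exact_mod_cast h1
          _ < (n : ℕ) := by exact_mod_cast show t + (n-1-t) < n by omega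
      · intro z hz
        have hβz := hu z hz
        have hsplit : (1 - β*z) ^ n = (1-β*z)^(t+1) * (1-β*z)^(n-1-t) := by
          rw [← pow_add]; congr 1; omega
        simp only [eval_mul, eval_pow, eval_sub, eval_one, eval_C, eval_X]
        rw [hsplit]
        exact (mul_div_mul_right _ _ (pow_ne_zero _ hβz)).symm
  | zero =>
      refine ⟨0, ?_, ?_⟩
      · rw [degree_zero]; exact WithBot.bot_lt_coe n
      · intro z hz; simp
  | add x y hx hy ihx ihy =>
      obtain ⟨Q1, hQ1, hQ1e⟩ := ihx
      obtain ⟨Q2, hQ2, hQ2e⟩ := ihy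
      refine ⟨Q1 + Q2, lt_of_le_of_lt (degree_add_le _ _) (max_lt hQ1 hQ2), ?_⟩
      intro z hz
      simp only [Pi.add_apply, eval_add, hQ1e z hz, hQ2e z hz, add_div]
  | smul c x hx ih =>
      obtain ⟨Q, hQ, hQe⟩ := ih
      refine ⟨c • Q, lt_of_le_of_lt (degree_smul_le _ _) hQ, ?_⟩
      intro z hz
      simp only [Pi.smul_apply, smul_eq_mul, eval_smul, hQe z hz, mul_div_assoc]

/-- for `θ = b_αⁿ` with `α ≠ 0`, the model space `Q_θ` reduces `C_φ` iff `φ`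
is the identity map. -/
theorem blaschke_power_model_space_reduces_iff
    (α : ℂ) (hα : α ∈ Metric.ball (0:ℂ) 1) (hα0 : α ≠ 0)
    (n : ℕ) (hn : 1 ≤ n) (φ : ℂ → ℂ) (hφ : SelfMapD φ) :
    (SpanInvOn (Qball α n) φ ∧
      BeurlingInv (fun z => ((z - α) / (1 - (starRingEnd ℂ) α * z)) ^ n) φ) ↔
      ∀ z ∈ Metric.ball (0:ℂ) 1, φ z = z := by
  obtain ⟨m, rfl⟩ : ∃ m, n = m + 1 := ⟨n - 1, by omega⟩
  set β := (starRingEnd ℂ) α with hβdef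
  have hβ0 : β ≠ 0 := by
    rw [hβdef]
    simpa using hα0
  have hαlt : ‖α‖ < 1 := by
    simpa [mem_ball_zero_iff] using hα
  have hβlt : ‖β‖ < 1 := by
    rw [hβdef]
    simpa [Complex.norm_conj] using hαlt
  have hu : ∀ w ∈ Metric.ball (0:ℂ) 1, 1 - β * w ≠ 0 := by
    intro w hw h
    have hw1 : ‖w‖ < 1 := by simpa [mem_ball_zero_iff] using hw
    have h1 : β * w = 1 := by linear_combination -h
    have h2 : ‖β * w‖ = 1 := by rw [h1, norm_one]
    rw [norm_mul] at h2
    nlinarith [norm_nonneg β, norm_nonneg w]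
  constructor
  · rintro ⟨hspan, hbeur⟩
    -- Step 1 : φ α = α from Beurling invariance with f = 1
    have hone : MemHardy2 (fun _ : ℂ => (1:ℂ)) := by
      refine ⟨differentiableOn_const 1, ⟨2 * Real.pi, ?_⟩⟩
      intro r _ _
      simp
    obtain ⟨g1, hg1H, hg1⟩ := hbeur _ hone
    have hφα : φ α = α := by
      have h := hg1 α hα
      simp only [sub_self, zero_div, mul_one] at h
      rw [zero_pow (by omega), zero_mul] at h
      have hden := hu (φ α) (hφ.2 hα)
      have h2 := pow_eq_zero_iff (n := m+1) (by omega) |>.mp h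
      rcases div_eq_zero_iff.mp h2 with h' | h'
      · exact sub_eq_zero.mp h'
      · exact absurd h' hden
    -- Step 2 : representations from span invariance
    have hf0 : (fun z : ℂ => z ^ 0 / (1 - β * z) ^ (0+1)) ∈ Qball α (m+1) :=
      Submodule.subset_span ⟨0, by omega, rfl⟩
    obtain ⟨g0, hg0Q, hg0⟩ := hspan _ hf0
    obtain ⟨P, hPdeg, hPrep⟩ := aux_qball_rep α hu (m+1) g0 hg0Q
    have E0 : ∀ z ∈ Metric.ball (0:ℂ) 1,
        (1 - β*z)^(m+1) = P.eval z * (1 - β * φ z) := by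
      intro z hz
      have h := hg0 z hz
      rw [hPrep z hz] at h
      simp only [pow_zero, zero_add, pow_one] at h
      rw [div_eq_div_iff (hu _ (hφ.2 hz)) (pow_ne_zero _ (hu z hz))] at h
      linear_combination h
    have hfm : (fun z : ℂ => z ^ m / (1 - β * z) ^ (m+1)) ∈ Qball α (m+1) :=
      Submodule.subset_span ⟨m, by omega, rfl⟩
    obtain ⟨gm, hgmQ, hgm⟩ := hspan _ hfm
    obtain ⟨Q, hQdeg, hQrep⟩ := aux_qball_rep α hu (m+1) gm hgmQ
    have E1 : ∀ z ∈ Metric.ball (0:ℂ) 1,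
        (φ z)^m * (1 - β*z)^(m+1) = Q.eval z * (1 - β * φ z)^(m+1) := by
      intro z hz
      have h := hgm z hz
      rw [hQrep z hz] at h
      rw [div_eq_div_iff (pow_ne_zero _ (hu _ (hφ.2 hz))) (pow_ne_zero _ (hu z hz))] at h
      exact h
    have h00 : (0:ℂ) ∈ Metric.ball (0:ℂ) 1 := by simp
    have hP0 : P ≠ 0 := by
      intro h
      have h2 := E0 0 h00
      rw [h] at h2
      simp at h2
    -- Step 3 : polynomial bookkeeping
    set a : ℂ := β⁻¹ with hadef
    have hba : β * a = 1 := mul_inv_cancel₀ hβ0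
    set p1 : Polynomial ℂ := 1 - C β * X with hp1def
    have hfac : C (-β) * (X - C a) = p1 := by
      have h1 : (C β : Polynomial ℂ) * C a = 1 := by rw [← C_mul, hba, C_1]
      rw [hp1def]
      have h2 : C (-β) * ((X : Polynomial ℂ) - C a) = C β * C a - C β * X := by
        rw [map_neg]; ring
      rw [h2, h1]
    have hp1ev : ∀ z : ℂ, p1.eval z = 1 - β * z := by
      intro z; rw [hp1def]; simp
    have hp10 : p1 ≠ 0 := by
      intro h
      have := hp1ev 0
      rw [h] at this
      simp at this
    have hp1deg : p1.natDegree = 1 := by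
      rw [← hfac, natDegree_C_mul (neg_ne_zero.mpr hβ0), natDegree_X_sub_C]
    have hp1pow : ∀ j : ℕ, p1 ^ j = C ((-β)^j) * (X - C a)^j := by
      intro j; rw [← hfac, mul_pow, ← C_pow]
    set D : Polynomial ℂ := P - p1^(m+1) with hDdef
    have hPnd : P.natDegree ≤ m := by
      have := (natDegree_lt_iff_degree_lt hP0).mpr hPdeg
      omega
    have hD0 : D ≠ 0 := by
      intro h
      have hPe : P = p1^(m+1) := by rw [hDdef] at h; linear_combination h
      have h2 : P.natDegree = m+1 := by rw [hPe, natDegree_pow, hp1deg, mul_one]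
      omega
    have hkm : P.rootMultiplicity a ≤ m := by
      have h1 : ((X - C a)^(P.rootMultiplicity a)).natDegree ≤ P.natDegree :=
        natDegree_le_of_dvd (pow_rootMultiplicity_dvd P a) hP0
      rw [natDegree_pow, natDegree_X_sub_C, mul_one] at h1
      omega
    have hrmD : D.rootMultiplicity a = P.rootMultiplicity a := by
      refine le_antisymm ?_ ?_
      · rw [rootMultiplicity_le_iff hD0]
        intro hdvd
        have hdvd2 : (X - C a)^(P.rootMultiplicity a + 1) ∣ p1^(m+1) := by
          rw [hp1pow]
          exact Dvd.dvd.mul_left (pow_dvd_pow _ (by omega)) _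
        have hdvd3 : (X - C a)^(P.rootMultiplicity a + 1) ∣ P := by
          have hPe : P = D + p1^(m+1) := by rw [hDdef]; ring
          nth_rewrite 2 [hPe]
          exact dvd_add hdvd hdvd2
        exact pow_rootMultiplicity_not_dvd hP0 a hdvd3
      · rw [le_rootMultiplicity_iff hD0, hDdef]
        refine dvd_sub (pow_rootMultiplicity_dvd P a) ?_
        rw [hp1pow]
        exact Dvd.dvd.mul_left (pow_dvd_pow _ (by omega)) _
    -- Step 4 : the key polynomial identity
    have hKeyEval : ∀ z ∈ Metric.ball (0:ℂ) 1,
        Polynomial.eval z (D^m * P * p1^(m+1)) =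
        Polynomial.eval z (C (β^m) * Q * p1^((m+1)*(m+1))) := by
      intro z hz
      have e0 := E0 z hz
      have e1 := E1 z hz
      simp only [hDdef, eval_mul, eval_pow, eval_sub, eval_one, eval_C, eval_X]
      rw [hp1ev z]
      have e2 : P.eval z - (1-β*z)^(m+1) = P.eval z * (β * φ z) := by
        rw [e0]; ring
      have e3 : (P.eval z * (1 - β * φ z))^(m+1)
          = P.eval z^m * P.eval z * (1 - β * φ z)^(m+1) := by
        rw [mul_pow, pow_succ]
      calc (P.eval z - (1-β*z)^(m+1))^m * P.eval z * (1-β*z)^(m+1)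
          = (P.eval z * (β * φ z))^m * P.eval z * (1-β*z)^(m+1) := by rw [e2]
        _ = P.eval z^m * (β^m * (φ z)^m) * P.eval z * (1-β*z)^(m+1) := by
            rw [mul_pow, mul_pow]
        _ = β^m * (P.eval z^m * P.eval z) * ((φ z)^m * (1-β*z)^(m+1)) := by ring
        _ = β^m * (P.eval z^m * P.eval z) * (Q.eval z * (1 - β*φ z)^(m+1)) := by rw [e1]
        _ = β^m * Q.eval z * (P.eval z^m * P.eval z * (1 - β*φ z)^(m+1)) := by ring
        _ = β^m * Q.eval z * (P.eval z * (1 - β*φ z))^(m+1) := by rw [e3]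
        _ = β^m * Q.eval z * ((1-β*z)^(m+1))^(m+1) := by rw [← e0]
        _ = β^m * Q.eval z * (1-β*z)^((m+1)*(m+1)) := by rw [← pow_mul]
    have hKey : D^m * P * p1^(m+1) = C (β^m) * Q * p1^((m+1)*(m+1)) := by
      have hsub : D^m * P * p1^(m+1) - C (β^m) * Q * p1^((m+1)*(m+1)) = 0 := by
        apply eq_zero_of_infinite_isRoot
        refine aux_ball_infinite.mono ?_
        intro z hz
        simp only [Set.mem_setOf_eq, IsRoot, eval_sub]
        rw [sub_eq_zero]
        exact hKeyEval z hz
      linear_combination hsub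
    have hQP0 : D^m * P ≠ 0 := mul_ne_zero (pow_ne_zero _ hD0) hP0
    have hKey2 : D^m * P = C (β^m) * Q * p1^(m*(m+1)) := by
      have hsplit : p1^((m+1)*(m+1)) = p1^(m*(m+1)) * p1^(m+1) := by
        rw [← pow_add]; congr 1; ring
      apply mul_right_cancel₀ (pow_ne_zero (m+1) hp10)
      rw [hKey, hsplit]; ring
    have hRHS0 : C (β^m) * Q * p1^(m*(m+1)) ≠ 0 := hKey2 ▸ hQP0
    have hQ0 : Q ≠ 0 := by rintro rfl; simp at hRHS0
    -- Step 5 : multiplicity count gives rootMultiplicity a P = m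
    have hrmp1 : p1.rootMultiplicity a = 1 := by
      rw [← hfac, rootMultiplicity_mul (by rw [hfac]; exact hp10), rootMultiplicity_C,
        rootMultiplicity_X_sub_C_self]
    have hCQ0 : C (β^m) * Q ≠ 0 := mul_ne_zero (by simp [hβ0]) hQ0
    have hmeq : (m+1) * P.rootMultiplicity a = Q.rootMultiplicity a + m*(m+1) := by
      have hL : (D^m * P).rootMultiplicity a = m * P.rootMultiplicity a + P.rootMultiplicity a := by
        rw [rootMultiplicity_mul hQP0, aux_rm_pow hD0, hrmD]
      have hR : (C (β^m) * Q * p1^(m*(m+1))).rootMultiplicity a = Q.rootMultiplicity a + m*(m+1) := by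
        rw [rootMultiplicity_mul hRHS0, rootMultiplicity_mul hCQ0, rootMultiplicity_C,
          aux_rm_pow hp10, hrmp1]
        ring
      rw [hKey2, hR] at hL
      calc (m+1) * P.rootMultiplicity a
          = m * P.rootMultiplicity a + P.rootMultiplicity a := by ring
        _ = _ := hL.symm
    have hkeq : P.rootMultiplicity a = m := by
      refine le_antisymm hkm ?_
      have h1 : (m+1)*m ≤ (m+1)*(P.rootMultiplicity a) := by
        rw [hmeq]
        calc (m+1)*m = m*(m+1) := by ring
          _ ≤ Q.rootMultiplicity a + m*(m+1) := Nat.le_add_left _ _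
      exact Nat.le_of_mul_le_mul_left h1 (by omega)
    -- Step 6 : P = (X - a)^m * (constant)
    obtain ⟨S, hSdef, hSnd⟩ := exists_eq_pow_rootMultiplicity_mul_and_not_dvd P hP0 a
    have hS0 : S ≠ 0 := by
      rintro rfl
      rw [mul_zero] at hSdef
      exact hP0 hSdef
    have hSnat : S.natDegree = 0 := by
      have h2 := congrArg natDegree hSdef
      rw [natDegree_mul (pow_ne_zero _ (X_sub_C_ne_zero a)) hS0, natDegree_pow,
        natDegree_X_sub_C, mul_one, hkeq] at h2
      omega
    obtain ⟨c, hc⟩ := natDegree_eq_zero.mp hSnat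
    have hc0 : c ≠ 0 := by
      rintro rfl
      rw [map_zero] at hc
      exact hS0 hc.symm
    -- Step 7 : pointwise linear equation for φ
    have hane : ∀ z ∈ Metric.ball (0:ℂ) 1, z - a ≠ 0 := by
      intro z hz h
      have hz1 : ‖z‖ < 1 := by simpa [mem_ball_zero_iff] using hz
      have hza : z = a := sub_eq_zero.mp h
      have ha1 : 1 < ‖a‖ := by
        rw [hadef, norm_inv]
        exact (one_lt_inv₀ (norm_pos_iff.mpr hβ0)).mpr hβlt
      rw [hza] at hz1
      linarith
    have hA : ∀ z ∈ Metric.ball (0:ℂ) 1,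
        (-β)^(m+1) * (z - a) = c * (1 - β * φ z) := by
      intro z hz
      have e0 := E0 z hz
      have hPev : P.eval z = (z - a)^m * c := by
        conv_lhs => rw [hSdef]
        rw [hkeq, ← hc]
        simp [eval_mul, eval_pow]
      have hu1 : (1 - β * z) = -β * (z - a) := by linear_combination -hba
      rw [hu1, hPev, mul_pow] at e0
      apply mul_left_cancel₀ (pow_ne_zero m (hane z hz))
      linear_combination e0
    have hαa : 1 - β * α ≠ 0 := hu α hα
    have hcval : c = (-β)^m := by
      have h := hA α hα
      rw [hφα] at h
      have h2 : (-β)^(m+1) * (α - a) = (-β)^m * (1 - β * α) := by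
        linear_combination ((-β)^m) * hba
      exact mul_right_cancel₀ hαa (h.symm.trans h2)
    -- Step 8 : conclude φ = id
    intro z hz
    have h := hA z hz
    rw [hcval] at h
    have hstep : β * φ z = β * z := by
      have hmb : (-β)^m ≠ 0 := pow_ne_zero _ (neg_ne_zero.mpr hβ0)
      have h2 : (-β)^m * (1 - β * z) = (-β)^m * (1 - β * φ z) := by
        linear_combination h - ((-β)^m) * hba
      have h3 := mul_left_cancel₀ hmb h2
      linear_combination h3
    exact mul_left_cancel₀ hβ0 hstep
  · intro hid
    constructor
    · intro f hf
      exact ⟨f, hf, fun z hz => by rw [hid z hz]⟩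
    · intro f hfH
      exact ⟨f, hfH, fun z hz => by rw [hid z hz]⟩
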